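/- Let C0, C1 ⊆ F2^{nA} be binary linear codes, G a finite group, and P a permutation matrix on F2^{nA·|G|} (column-indexed by [nA] × G). Consider the two block matrices X0 whose row space consists of all vectors of F2^{2·nA·|G|} of the form (w, w) with w ∈ Row(H0 ⊗ I_{|G|}), and X1 whose row space consists of all vectors (w', w'·Q) with w' ∈ Row(H1 ⊗ I_{|G|}), where Q = I_{nA} ⊗ Q_G for a permutation matrix Q_G on F2^{|G|} that is a single |G|-cycle. Then dim(Row(X0) ∩ Row(X1)) = dim(C0^⊥ ∩ C1^⊥). -/

import Mathlib

open Matrix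

abbrev F2 : Type := ZMod 2

/-- The dual code of a linear code `C ⊆ F2^n` w.r.t. the standard bilinear form. -/
def dualCode {n : ℕ} (C : Submodule F2 (Fin n → F2)) : Submodule F2 (Fin n → F2) where
  carrier := {x | ∀ c ∈ C, x ⬝ᵥ c = 0}
  add_mem' := by
    intro a b ha hb c hc
    rw [Set.mem_setOf_eq] at *
    rw [add_dotProduct, ha c hc, hb c hc, add_zero]
  zero_mem' := by
    intro c hc
    simp
  smul_mem' := by
    intro r x hx c hc
    rw [Set.mem_setOf_eq] at *
    rw [smul_dotProduct, hx c hc, smul_zero]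

/-- The row space of a matrix, as a submodule of the space of row vectors. -/
def rowSpace {R C : Type*} (M : Matrix R C F2) : Submodule F2 (C → F2) :=
  Submodule.span F2 (Set.range M)

/-- extension by a single fiber -/
def extMap {n m : ℕ} (b : Fin m) : (Fin n → F2) →ₗ[F2] (Fin n × Fin m → F2) where
  toFun f := fun p => if p.2 = b then f p.1 else 0
  map_add' := by intro f g; funext p; by_cases h : p.2 = b <;> simp [h]
  map_smul' := by intro c f; funext p; by_cases h : p.2 = b <;> simp [h]

open Kronecker in
lemma mem_rowSpace_kron_one_iff {r n m : ℕ} (H : Matrix (Fin r) (Fin n) F2)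
    (v : Fin n × Fin m → F2) :
    v ∈ rowSpace (H ⊗ₖ (1 : Matrix (Fin m) (Fin m) F2)) ↔
      ∀ b, (fun a => v (a, b)) ∈ rowSpace H := by
  constructor
  · intro hv b
    have hle : rowSpace (H ⊗ₖ (1 : Matrix (Fin m) (Fin m) F2)) ≤
        (rowSpace H).comap (LinearMap.funLeft F2 F2 (fun a : Fin n => (a, b))) := by
      rw [rowSpace, Submodule.span_le]
      rintro _ ⟨⟨i, j⟩, rfl⟩
      simp only [SetLike.mem_coe, Submodule.mem_comap]
      have : LinearMap.funLeft F2 F2 (fun a : Fin n => (a, b))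
          ((H ⊗ₖ (1 : Matrix (Fin m) (Fin m) F2)) (i, j))
          = ((1 : Matrix (Fin m) (Fin m) F2) j b) • H i := by
        funext a
        simp [Matrix.one_apply, mul_comm]
      rw [this]
      exact Submodule.smul_mem _ _ (Submodule.subset_span ⟨i, rfl⟩)
    exact hle hv
  · intro hv
    have hext : ∀ (b : Fin m) (f : Fin n → F2), f ∈ rowSpace H →
        extMap b f ∈ rowSpace (H ⊗ₖ (1 : Matrix (Fin m) (Fin m) F2)) := by
      intro b f hf
      have hle : rowSpace H ≤
          (rowSpace (H ⊗ₖ (1 : Matrix (Fin m) (Fin m) F2))).comap (extMap b) := by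
        rw [rowSpace, Submodule.span_le]
        rintro _ ⟨i, rfl⟩
        simp only [SetLike.mem_coe, Submodule.mem_comap]
        have : extMap b (H i) = (H ⊗ₖ (1 : Matrix (Fin m) (Fin m) F2)) (i, b) := by
          funext p
          rcases p with ⟨a, c⟩
          by_cases h : c = b <;> simp [extMap, Matrix.one_apply, h, eq_comm]
        rw [this]
        exact Submodule.subset_span ⟨(i, b), rfl⟩
      exact hle hf
    have hv' : v = ∑ b : Fin m, extMap b (fun a => v (a, b)) := by
      funext p
      rcases p with ⟨a, c⟩
      simp [extMap, Finset.sum_apply, Finset.sum_ite_eq']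
    rw [hv']
    exact Submodule.sum_mem _ (fun b _ => hext b _ (hv b))

lemma shift_invariant {n m : ℕ} (σ : Equiv.Perm (Fin m)) (u : Fin n × Fin m → F2)
    (h : ∀ p : Fin n × Fin m, u (p.1, σ p.2) = u p) (k : ℕ) (a : Fin n) (b : Fin m) :
    u (a, (σ ^ k) b) = u (a, b) := by
  induction k with
  | zero => simp
  | succ k ih =>
    have : (σ ^ (k + 1)) b = σ ((σ ^ k) b) := by
      rw [pow_succ']; rfl
    rw [this, h (a, (σ ^ k) b), ih]


open Kronecker in
theorem stmt9 {nA m r0 r1 : ℕ}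
    (C0 C1 : Submodule F2 (Fin nA → F2))
    (H0 : Matrix (Fin r0) (Fin nA) F2) (H1 : Matrix (Fin r1) (Fin nA) F2)
    (hH0 : rowSpace H0 = dualCode C0) (hH1 : rowSpace H1 = dualCode C1)
    (σ : Equiv.Perm (Fin m)) (hcyc : σ.IsCycle) (hsupp : σ.support = Finset.univ) :
    -- Row(X0) consists of vectors (w, w) with w ∈ Row(H0 ⊗ I_m);
    -- Row(X1) consists of vectors (w', w'·Q) with w' ∈ Row(H1 ⊗ I_m), Q = I_{nA} ⊗ Q_G.
    Module.finrank F2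
      (((rowSpace (H0 ⊗ₖ (1 : Matrix (Fin m) (Fin m) F2))).map
            (LinearMap.prod LinearMap.id LinearMap.id) ⊓
        (rowSpace (H1 ⊗ₖ (1 : Matrix (Fin m) (Fin m) F2))).map
            (LinearMap.prod LinearMap.id
              (LinearMap.funLeft F2 F2 (fun p : Fin nA × Fin m => (p.1, σ p.2)))) :
          Submodule F2 ((Fin nA × Fin m → F2) × (Fin nA × Fin m → F2))))
      = Module.finrank F2 ((dualCode C0 ⊓ dualCode C1 : Submodule F2 (Fin nA → F2))) := by
  classical
  obtain ⟨x0, hx0, -⟩ := id hcyc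
  have hmove : ∀ b : Fin m, σ b ≠ b := by
    intro b
    have : b ∈ σ.support := by rw [hsupp]; exact Finset.mem_univ b
    exact Equiv.Perm.mem_support.mp this
  set J : (Fin nA → F2) →ₗ[F2] (Fin nA × Fin m → F2) :=
    LinearMap.funLeft F2 F2 (Prod.fst : Fin nA × Fin m → Fin nA) with hJ
  set Φ : (Fin nA → F2) →ₗ[F2] (Fin nA × Fin m → F2) × (Fin nA × Fin m → F2) :=
    LinearMap.prod J J with hΦ
  have hinj : Function.Injective Φ := by
    intro f g hfg
    have h1 : J f = J g := congrArg Prod.fst hfg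
    funext a
    exact congrFun h1 (a, x0)
  have key : ((rowSpace (H0 ⊗ₖ (1 : Matrix (Fin m) (Fin m) F2))).map
            (LinearMap.prod LinearMap.id LinearMap.id) ⊓
        (rowSpace (H1 ⊗ₖ (1 : Matrix (Fin m) (Fin m) F2))).map
            (LinearMap.prod LinearMap.id
              (LinearMap.funLeft F2 F2 (fun p : Fin nA × Fin m => (p.1, σ p.2)))))
      = (dualCode C0 ⊓ dualCode C1).map Φ := by
    apply le_antisymm
    · rintro ⟨x, y⟩ ⟨h1, h2⟩
      obtain ⟨u, hu, huxy⟩ := Submodule.mem_map.mp h1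
      obtain ⟨w, hw, hwxy⟩ := Submodule.mem_map.mp h2
      simp only [LinearMap.prod_apply, Function.prod, LinearMap.id_apply, Prod.mk.injEq] at huxy hwxy
      obtain ⟨rfl, rfl⟩ := huxy
      obtain ⟨rfl, hy⟩ := hwxy
      -- now u = w = x, and hy : funLeft τ w = w
      have hfix : ∀ p : Fin nA × Fin m, w (p.1, σ p.2) = w p := by
        intro p
        exact congrFun hy p
      have hconst : ∀ a b, w (a, b) = w (a, x0) := by
        intro a b
        have hsc : σ.SameCycle x0 b := hcyc.sameCycle hx0 (hmove b)
        obtain ⟨k, -, hk⟩ := hsc.exists_pow_eq'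
        rw [← hk, shift_invariant σ w hfix]
      refine Submodule.mem_map.mpr ⟨fun a => w (a, x0), ?_, ?_⟩
      · constructor
        · rw [← hH0]
          exact (mem_rowSpace_kron_one_iff H0 w).mp hu x0
        · rw [← hH1]
          exact (mem_rowSpace_kron_one_iff H1 w).mp hw x0
      · have hJw : J (fun a => w (a, x0)) = w := by
          funext p
          exact (hconst p.1 p.2).symm
        simp only [hΦ, LinearMap.prod_apply, Function.prod, hJw]
    · rintro z hz
      obtain ⟨f, hf, rfl⟩ := Submodule.mem_map.mp hz
      have hJf0 : J f ∈ rowSpace (H0 ⊗ₖ (1 : Matrix (Fin m) (Fin m) F2)) := by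
        rw [mem_rowSpace_kron_one_iff]
        intro b
        rw [hH0]
        exact hf.1
      have hJf1 : J f ∈ rowSpace (H1 ⊗ₖ (1 : Matrix (Fin m) (Fin m) F2)) := by
        rw [mem_rowSpace_kron_one_iff]
        intro b
        rw [hH1]
        exact hf.2
      constructor
      · exact Submodule.mem_map.mpr ⟨J f, hJf0, rfl⟩
      · refine Submodule.mem_map.mpr ⟨J f, hJf1, ?_⟩
        simp only [LinearMap.prod_apply, Function.prod, LinearMap.id_apply, hΦ]
        congr 1
  rw [key]
  exact (Submodule.equivMapOfInjective Φ hinj _).finrank_eq.symm
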